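/- Let G = Θ_{p,q,r} with p ≤ q ≤ r, where p, q and r are all odd and q = r = p+2. Then the set S = {v₁, w₁} is a vertex metric generator of G. -/

import Mathlib

/-- Vertices of the Θ-graph `Θ_{p,q,r}`: the two branching vertices `u` and `v`,
together with the internal vertices of the three `u`–`v` paths of lengths `p`, `q`, `r`.
`a i` is the internal vertex `u_{i+1}` of the first path, `b i` is `v_{i+1}` of the
second path, and `c i` is `w_{i+1}` of the third path. -/
inductive ThetaVert (p q r : ℕ) : Type where
  | u : ThetaVert p q r
  | v : ThetaVert p q r
  | a : Fin (p - 1) → ThetaVert p q r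
  | b : Fin (q - 1) → ThetaVert p q r
  | c : Fin (r - 1) → ThetaVert p q r
  deriving DecidableEq

/-- Base adjacency relation for the Θ-graph (one direction of each edge). -/
def thetaRel (p q r : ℕ) : ThetaVert p q r → ThetaVert p q r → Prop
  | .u, .v => p = 1 ∨ q = 1 ∨ r = 1
  | .u, .a i => (i : ℕ) = 0
  | .u, .b i => (i : ℕ) = 0
  | .u, .c i => (i : ℕ) = 0
  | .a i, .v => (i : ℕ) = p - 2
  | .b i, .v => (i : ℕ) = q - 2
  | .c i, .v => (i : ℕ) = r - 2
  | .a i, .a j => (j : ℕ) = (i : ℕ) + 1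
  | .b i, .b j => (j : ℕ) = (i : ℕ) + 1
  | .c i, .c j => (j : ℕ) = (i : ℕ) + 1
  | _, _ => False

/-- The Θ-graph `Θ_{p,q,r}`. -/
def thetaGraph (p q r : ℕ) : SimpleGraph (ThetaVert p q r) :=
  SimpleGraph.fromRel (thetaRel p q r)

/-- The vertex `u_i` (for `0 ≤ i ≤ p`) on the first path of `Θ_{p,q,r}`. -/
def uV (p q r : ℕ) (i : ℕ) : ThetaVert p q r :=
  if h : 0 < i ∧ i < p then ThetaVert.a ⟨i - 1, by omega⟩
  else if i = 0 then ThetaVert.u else ThetaVert.v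

/-- The vertex `v_i` (for `0 ≤ i ≤ q`) on the second path of `Θ_{p,q,r}`. -/
def vV (p q r : ℕ) (i : ℕ) : ThetaVert p q r :=
  if h : 0 < i ∧ i < q then ThetaVert.b ⟨i - 1, by omega⟩
  else if i = 0 then ThetaVert.u else ThetaVert.v

/-- The vertex `w_i` (for `0 ≤ i ≤ r`) on the third path of `Θ_{p,q,r}`. -/
def wV (p q r : ℕ) (i : ℕ) : ThetaVert p q r :=
  if h : 0 < i ∧ i < r then ThetaVert.c ⟨i - 1, by omega⟩
  else if i = 0 then ThetaVert.u else ThetaVert.v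

/-- `S` is a vertex metric generator of `G`: every pair of distinct vertices is
distinguished by some vertex of `S`. -/
def IsVertexMetricGenerator {V : Type*} (G : SimpleGraph V) (S : Set V) : Prop :=
  ∀ x x' : V, x ≠ x' → ∃ s ∈ S, G.dist s x ≠ G.dist s x'

/-- The vertex metric dimension of `G`: the least cardinality of a vertex metric generator. -/
noncomputable def vertexMetricDim {V : Type*} (G : SimpleGraph V) : ℕ :=
  sInf {n : ℕ | ∃ S : Finset V, S.card = n ∧ IsVertexMetricGenerator G ↑S}

/-- Distance from a vertex `x` to an edge `e`: the minimum of the distances to its endpoints. -/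
noncomputable def edgeDist {V : Type*} (G : SimpleGraph V) (x : V) (e : Sym2 V) : ℕ :=
  Sym2.lift ⟨fun y z => min (G.dist x y) (G.dist x z), fun _ _ => min_comm _ _⟩ e

/-- `S` is an edge metric generator of `G`: every pair of distinct edges is
distinguished by some vertex of `S`. -/
def IsEdgeMetricGenerator {V : Type*} (G : SimpleGraph V) (S : Set V) : Prop :=
  ∀ e ∈ G.edgeSet, ∀ f ∈ G.edgeSet, e ≠ f → ∃ s ∈ S, edgeDist G s e ≠ edgeDist G s f

/-- The edge metric dimension of `G`: the least cardinality of an edge metric generator. -/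
noncomputable def edgeMetricDim {V : Type*} (G : SimpleGraph V) : ℕ :=
  sInf {n : ℕ | ∃ S : Finset V, S.card = n ∧ IsEdgeMetricGenerator G ↑S}


open SimpleGraph

/-- If `D` satisfies the BFS spec from `s`, then `G.dist s · = D`. -/
lemma dist_eq_of_spec {V : Type*} (G : SimpleGraph V) (s : V) (D : V → ℕ)
    (hs : D s = 0) (h0 : ∀ x, D x = 0 → x = s)
    (hlip : ∀ x y, G.Adj x y → D y ≤ D x + 1)
    (hdown : ∀ x, D x ≠ 0 → ∃ y, G.Adj x y ∧ D y + 1 = D x) :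
    ∀ x, G.dist s x = D x := by
  have up : ∀ n x, D x ≤ n → ∃ w : G.Walk x s, w.length = D x := by
    intro n
    induction n with
    | zero =>
      intro x hx
      have := h0 x (Nat.le_zero.mp hx); subst this
      exact ⟨.nil, by simp [hs]⟩
    | succ n ih =>
      intro x hx
      by_cases hz : D x = 0
      · have := h0 x hz; subst this
        exact ⟨.nil, by simp [hs]⟩
      · obtain ⟨y, hadj, hy⟩ := hdown x hz
        obtain ⟨w, hw⟩ := ih y (by omega)
        refine ⟨.cons hadj w, ?_⟩
        simp [hw]; omega
  intro x
  obtain ⟨w, hw⟩ := up (D x) x le_rfl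
  have hub : G.dist s x ≤ D x := by
    rw [SimpleGraph.dist_comm]
    exact hw ▸ SimpleGraph.dist_le w
  have hr : G.Reachable s x := ⟨w.reverse⟩
  obtain ⟨w', hw'⟩ := hr.exists_walk_length_eq_dist
  have key : ∀ {a b : V} (w : G.Walk a b), D b ≤ D a + w.length := by
    intro a b w
    induction w with
    | nil => simp
    | cons h w ih =>
      have := hlip _ _ h
      simp only [SimpleGraph.Walk.length_cons]
      omega
  have := key w'
  rw [hs, hw'] at this
  omega

/-- Distance from `v₁ = b 0` in `Θ_{p,p+2,p+2}`. -/
def D1 (p : ℕ) : ThetaVert p (p+2) (p+2) → ℕ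
  | .u => 1
  | .v => p + 1
  | .a j => (j : ℕ) + 2
  | .b j => (j : ℕ)
  | .c j => (j : ℕ) + 2

/-- Distance from `w₁ = c 0` in `Θ_{p,p+2,p+2}`. -/
def D2 (p : ℕ) : ThetaVert p (p+2) (p+2) → ℕ
  | .u => 1
  | .v => p + 1
  | .a j => (j : ℕ) + 2
  | .b j => (j : ℕ) + 2
  | .c j => (j : ℕ)

lemma dist_b0 (p : ℕ) (hp : 1 ≤ p) :
    ∀ x, (thetaGraph p (p+2) (p+2)).dist (ThetaVert.b ⟨0, by omega⟩) x = D1 p x := by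
  apply dist_eq_of_spec
  · rfl
  · intro x hx
    cases x <;> simp only [D1] at hx <;>
      first
      | omega
      | (rename_i j; exact absurd hx (by omega))
      | (rename_i j; exact congrArg _ (Fin.ext hx))
  · intro x y hxy
    obtain ⟨hne, h⟩ := (SimpleGraph.fromRel_adj _ _ _).mp hxy
    cases x <;> cases y <;>
      simp only [thetaRel, D1] at h ⊢ <;>
      (try rcases h with h | h) <;>
      (try rcases h with h | h) <;>
      first
      | (rename_i i j; have hi := i.isLt; have hj := j.isLt; omega)
      | (rename_i i; have hi := i.isLt; omega)
      | omega
  · intro x hx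
    cases x with
    | u =>
      refine ⟨.b ⟨0, by omega⟩, ?_, by simp [D1]⟩
      exact (SimpleGraph.fromRel_adj _ _ _).mpr ⟨by simp, Or.inl rfl⟩
    | v =>
      refine ⟨.b ⟨p, by omega⟩, ?_, by simp [D1]⟩
      refine (SimpleGraph.fromRel_adj _ _ _).mpr ⟨by simp, Or.inr ?_⟩
      show (p : ℕ) = p + 2 - 2
      omega
    | a j =>
      by_cases hj : (j : ℕ) = 0
      · refine ⟨.u, ?_, by simp [D1]; omega⟩
        exact (SimpleGraph.fromRel_adj _ _ _).mpr ⟨by simp, Or.inr hj⟩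
      · have hjl := j.isLt
        refine ⟨.a ⟨(j : ℕ) - 1, by omega⟩, ?_, by simp [D1]; omega⟩
        refine (SimpleGraph.fromRel_adj _ _ _).mpr ⟨?_, Or.inr ?_⟩
        · simp only [ne_eq, ThetaVert.a.injEq, Fin.ext_iff]; omega
        · show (j : ℕ) = (j : ℕ) - 1 + 1
          omega
    | b j =>
      have hj : (j : ℕ) ≠ 0 := by simpa [D1] using hx
      have hjl := j.isLt
      refine ⟨.b ⟨(j : ℕ) - 1, by omega⟩, ?_, by simp [D1]; omega⟩
      refine (SimpleGraph.fromRel_adj _ _ _).mpr ⟨?_, Or.inr ?_⟩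
      · simp only [ne_eq, ThetaVert.b.injEq, Fin.ext_iff]; omega
      · show (j : ℕ) = (j : ℕ) - 1 + 1
        omega
    | c j =>
      by_cases hj : (j : ℕ) = 0
      · refine ⟨.u, ?_, by show 1 + 1 = (j : ℕ) + 2; omega⟩
        exact (SimpleGraph.fromRel_adj _ _ _).mpr ⟨by simp, Or.inr hj⟩
      · have hjl := j.isLt
        refine ⟨.c ⟨(j : ℕ) - 1, by omega⟩, ?_, by simp [D1]; omega⟩
        refine (SimpleGraph.fromRel_adj _ _ _).mpr ⟨?_, Or.inr ?_⟩
        · simp only [ne_eq, ThetaVert.c.injEq, Fin.ext_iff]; omega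
        · show (j : ℕ) = (j : ℕ) - 1 + 1
          omega

lemma dist_c0 (p : ℕ) (hp : 1 ≤ p) :
    ∀ x, (thetaGraph p (p+2) (p+2)).dist (ThetaVert.c ⟨0, by omega⟩) x = D2 p x := by
  apply dist_eq_of_spec
  · rfl
  · intro x hx
    cases x <;> simp only [D2] at hx <;>
      first
      | omega
      | (rename_i j; exact absurd hx (by omega))
      | (rename_i j; exact congrArg _ (Fin.ext hx))
  · intro x y hxy
    obtain ⟨hne, h⟩ := (SimpleGraph.fromRel_adj _ _ _).mp hxy
    cases x <;> cases y <;>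
      simp only [thetaRel, D2] at h ⊢ <;>
      (try rcases h with h | h) <;>
      (try rcases h with h | h) <;>
      first
      | (rename_i i j; have hi := i.isLt; have hj := j.isLt; omega)
      | (rename_i i; have hi := i.isLt; omega)
      | omega
  · intro x hx
    cases x with
    | u =>
      refine ⟨.c ⟨0, by omega⟩, ?_, by simp [D2]⟩
      exact (SimpleGraph.fromRel_adj _ _ _).mpr ⟨by simp, Or.inl rfl⟩
    | v =>
      refine ⟨.c ⟨p, by omega⟩, ?_, by simp [D2]⟩
      refine (SimpleGraph.fromRel_adj _ _ _).mpr ⟨by simp, Or.inr ?_⟩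
      show (p : ℕ) = p + 2 - 2
      omega
    | a j =>
      by_cases hj : (j : ℕ) = 0
      · refine ⟨.u, ?_, by simp [D2]; omega⟩
        exact (SimpleGraph.fromRel_adj _ _ _).mpr ⟨by simp, Or.inr hj⟩
      · have hjl := j.isLt
        refine ⟨.a ⟨(j : ℕ) - 1, by omega⟩, ?_, by simp [D2]; omega⟩
        refine (SimpleGraph.fromRel_adj _ _ _).mpr ⟨?_, Or.inr ?_⟩
        · simp only [ne_eq, ThetaVert.a.injEq, Fin.ext_iff]; omega
        · show (j : ℕ) = (j : ℕ) - 1 + 1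
          omega
    | c j =>
      have hj : (j : ℕ) ≠ 0 := by simpa [D2] using hx
      have hjl := j.isLt
      refine ⟨.c ⟨(j : ℕ) - 1, by omega⟩, ?_, by simp [D2]; omega⟩
      refine (SimpleGraph.fromRel_adj _ _ _).mpr ⟨?_, Or.inr ?_⟩
      · simp only [ne_eq, ThetaVert.c.injEq, Fin.ext_iff]; omega
      · show (j : ℕ) = (j : ℕ) - 1 + 1
        omega
    | b j =>
      by_cases hj : (j : ℕ) = 0
      · refine ⟨.u, ?_, by show 1 + 1 = (j : ℕ) + 2; omega⟩
        exact (SimpleGraph.fromRel_adj _ _ _).mpr ⟨by simp, Or.inr hj⟩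
      · have hjl := j.isLt
        refine ⟨.b ⟨(j : ℕ) - 1, by omega⟩, ?_, by simp [D2]; omega⟩
        refine (SimpleGraph.fromRel_adj _ _ _).mpr ⟨?_, Or.inr ?_⟩
        · simp only [ne_eq, ThetaVert.b.injEq, Fin.ext_iff]; omega
        · show (j : ℕ) = (j : ℕ) - 1 + 1
          omega

lemma D_injective (p : ℕ) (hp : 1 ≤ p) (x x' : ThetaVert p (p+2) (p+2))
    (hne : x ≠ x') (h1 : D1 p x = D1 p x') : D2 p x ≠ D2 p x' := by
  cases x <;> cases x' <;>
    simp only [D1, D2, ne_eq, ThetaVert.a.injEq, ThetaVert.b.injEq, ThetaVert.c.injEq,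
      Fin.ext_iff, not_true_eq_false, not_false_eq_true] at hne h1 ⊢ <;>
    first
    | (rename_i i j; have hi := i.isLt; have hj := j.isLt; omega)
    | (rename_i i; have hi := i.isLt; omega)
    | omega

/-- in `Θ_{p,q,r}` with `1 ≤ p ≤ q ≤ r`, `q ≥ 2`, all of `p`, `q`,
`r` odd and `q = r = p+2`, the set `{v₁, w₁}` is a vertex metric generator. -/
theorem isVertexGenerator_case_viii (p q r : ℕ)
    (hp : 1 ≤ p) (hpq : p ≤ q) (hqr : q ≤ r) (hq2 : 2 ≤ q)
    (hpo : Odd p) (hqo : Odd q) (hro : Odd r)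
    (hq : q = p + 2) (hr : r = p + 2) :
    IsVertexMetricGenerator (thetaGraph p q r)
      {vV p q r 1, wV p q r 1} := by
  subst hq hr
  have hv1 : vV p (p+2) (p+2) 1 = ThetaVert.b ⟨0, by omega⟩ := by
    rw [vV, dif_pos (by omega)]
  have hw1 : wV p (p+2) (p+2) 1 = ThetaVert.c ⟨0, by omega⟩ := by
    rw [wV, dif_pos (by omega)]
  intro x x' hne
  by_cases hD : D1 p x = D1 p x'
  · refine ⟨wV p (p+2) (p+2) 1, Or.inr rfl, ?_⟩
    rw [hw1, dist_c0 p hp, dist_c0 p hp]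
    exact D_injective p hp x x' hne hD
  · refine ⟨vV p (p+2) (p+2) 1, Or.inl rfl, ?_⟩
    rw [hv1, dist_b0 p hp, dist_b0 p hp]
    exact hD
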